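/- The quantities I0, I1, I2, I3, I4 defined on words over Φ — where I0(W) counts occurrences of letters L and M in W; I1(W) counts L and P; I2(W) counts L, g, R; I3(W) counts L, g, Q; I4(W) counts L, g, t1, t2, t3, s1, s2 — are invariant under the defining relations of H: if W and W' are words over Φ equivalent under the congruence generated by the non-zero defining relations of H, then I_m(W) = I_m(W') for m = 0,...,4. -/

import Mathlib

inductive Phi
  | L | M | P | Q | R | g | s1 | s2 | t1 | t2 | t3 | a1 | a2 | a3
deriving DecidableEq

open Phi

abbrev W0 := WithZero (FreeMonoid Phi)

def w (l : List Phi) : W0 := ((FreeMonoid.ofList l : FreeMonoid Phi) : W0)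

def ai : Fin 3 → Phi
  | 0 => a1 | 1 => a2 | 2 => a3

def ti : Fin 3 → Phi
  | 0 => t1 | 1 => t2 | 2 => t3

def si : Fin 2 → Phi
  | 0 => s1 | 1 => s2

/-- `x` is one of the letters `a1, a2, a3`. -/
def isA (x : Phi) : Prop := x = a1 ∨ x = a2 ∨ x = a3

/-- The defining relations (1)–(14) of the semigroup `H`. -/
inductive rel : W0 → W0 → Prop
  | r1L (x : Phi) : rel (w [x, L]) 0
  | r1M (x : Phi) : rel (w [x, M]) 0
  | r2 : rel (w [L]) (w [M, P, g])
  | r3 (i : Fin 3) : rel (w [g, ai i]) (w [ai i, g])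
  | r4 (x : Phi) (h : ¬ isA x) : rel (w [g, x]) 0
  | r5 (i j : Fin 3) : rel (w [ai i, g, ai j]) (w [ai i, R, s1, Q, ai j])
  | r6 (i : Fin 3) (x : Phi) (h : x = R ∨ isA x) : rel (w [ti i, x]) (w [x, ti i])
  | r7 (i : Fin 3) : rel (w [P, ai i, ti i]) (w [ai i, P, s1])
  | r8 (i j : Fin 3) (h : i ≠ j) : rel (w [P, ai j, ti i]) (w [ai j, P, s2])
  | r9 (i : Fin 3) (j : Fin 2) : rel (w [si j, ai i]) (w [ai i, si j])
  | r10 : rel (w [s1, R]) (w [R, s1])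
  | r11 (i : Fin 3) : rel (w [s1, Q, ai i]) (w [ti i, ai i, Q])
  | r12 : rel (w [P, R, s1]) 0
  | r13 (i : Fin 3) : rel (w [s2, R, ai i]) (w [ai i, s2, R])
  | r14 (i : Fin 3) : rel (w [s2, R, Q, ai i]) (w [R, ti i, ai i, Q])

/-- The congruence on the free monoid with zero generated by the relations. -/
def hCon : Con W0 := conGen rel

/-- The semigroup (with zero) `H` of the paper. -/
abbrev H := hCon.Quotient

/-- The quotient map. -/
def q : W0 →* H := hCon.mk'

/-- `l` is a word in the letters `a1, a2, a3`. -/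
def Aword (l : List Phi) : Prop := ∀ x ∈ l, isA x

/-- `l` is square-free: it contains no factor `Y ++ Y` with `Y` nonempty. -/
def SqFree (l : List Phi) : Prop := ∀ Y : List Phi, Y ≠ [] → ¬ (Y ++ Y) <:+: l

/-- The non-zero defining relations of `H` (relations (2),(3),(5)–(11),(13),(14)). -/
inductive relNZ : W0 → W0 → Prop
  | r2 : relNZ (w [L]) (w [M, P, g])
  | r3 (i : Fin 3) : relNZ (w [g, ai i]) (w [ai i, g])
  | r5 (i j : Fin 3) : relNZ (w [ai i, g, ai j]) (w [ai i, R, s1, Q, ai j])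
  | r6 (i : Fin 3) (x : Phi) (h : x = R ∨ isA x) : relNZ (w [ti i, x]) (w [x, ti i])
  | r7 (i : Fin 3) : relNZ (w [P, ai i, ti i]) (w [ai i, P, s1])
  | r8 (i j : Fin 3) (h : i ≠ j) : relNZ (w [P, ai j, ti i]) (w [ai j, P, s2])
  | r9 (i : Fin 3) (j : Fin 2) : relNZ (w [si j, ai i]) (w [ai i, si j])
  | r10 : relNZ (w [s1, R]) (w [R, s1])
  | r11 (i : Fin 3) : relNZ (w [s1, Q, ai i]) (w [ti i, ai i, Q])
  | r13 (i : Fin 3) : relNZ (w [s2, R, ai i]) (w [ai i, s2, R])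
  | r14 (i : Fin 3) : relNZ (w [s2, R, Q, ai i]) (w [R, ti i, ai i, Q])

/-- The invariants `I0, I1, I2, I3, I4` of a word. -/
def I : Fin 5 → List Phi → ℕ
  | 0, l => l.count L + l.count M
  | 1, l => l.count L + l.count P
  | 2, l => l.count L + l.count g + l.count R
  | 3, l => l.count L + l.count g + l.count Q
  | 4, l => l.count L + l.count g + l.count t1 + l.count t2 + l.count t3
              + l.count s1 + l.count s2

def cnt : Fin 5 → Phi → ℕ
  | 0, L => 1 | 0, M => 1
  | 1, L => 1 | 1, P => 1
  | 2, L => 1 | 2, g => 1 | 2, R => 1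
  | 3, L => 1 | 3, g => 1 | 3, Q => 1
  | 4, L => 1 | 4, g => 1 | 4, t1 => 1 | 4, t2 => 1 | 4, t3 => 1
  | 4, s1 => 1 | 4, s2 => 1
  | _, _ => 0
noncomputable def F (m : Fin 5) : W0 →* WithZero (Multiplicative ℕ) :=
  WithZero.map' (FreeMonoid.lift (fun x => Multiplicative.ofAdd (cnt m x)))
lemma lift_ofList (m : Fin 5) (l : List Phi) :
    FreeMonoid.lift (fun x => Multiplicative.ofAdd (cnt m x)) (FreeMonoid.ofList l)
      = Multiplicative.ofAdd ((l.map (cnt m)).sum) := by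
  induction l with
  | nil => rfl
  | cons x l ih =>
    rw [FreeMonoid.ofList_cons, map_mul, ih, FreeMonoid.lift_eval_of]
    exact (ofAdd_add _ _).symm

lemma F_w (m : Fin 5) (l : List Phi) :
    F m (w l) = ((Multiplicative.ofAdd ((l.map (cnt m)).sum) : Multiplicative ℕ) :
      WithZero (Multiplicative ℕ)) := by
  have key : F m (w l) = ((FreeMonoid.lift (fun x => Multiplicative.ofAdd (cnt m x))
      (FreeMonoid.ofList l) : Multiplicative ℕ) : WithZero (Multiplicative ℕ)) := rfl
  rw [key, lift_ofList]

lemma hrel (m : Fin 5) : ∀ x y, relNZ x y → Con.ker (F m) x y := by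
  intro x y h
  rw [Con.ker_rel]
  have key : ∀ l l' : List Phi, (l.map (cnt m)).sum = (l'.map (cnt m)).sum →
      F m (w l) = F m (w l') := by
    intro l l' hs; rw [F_w, F_w, hs]
  cases h with
  | r2 => exact key _ _ (by fin_cases m <;> decide)
  | r3 i => exact key _ _ (by fin_cases m <;> fin_cases i <;> decide)
  | r5 i j => exact key _ _ (by fin_cases m <;> fin_cases i <;> fin_cases j <;> decide)
  | r6 i x hx =>
    unfold isA at hx
    rcases hx with rfl | rfl | rfl | rfl <;>
      exact key _ _ (by fin_cases m <;> fin_cases i <;> decide)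
  | r7 i => exact key _ _ (by fin_cases m <;> fin_cases i <;> decide)
  | r8 i j _ => exact key _ _ (by fin_cases m <;> fin_cases i <;> fin_cases j <;> decide)
  | r9 i j => exact key _ _ (by fin_cases m <;> fin_cases i <;> fin_cases j <;> decide)
  | r10 => exact key _ _ (by fin_cases m <;> decide)
  | r11 i => exact key _ _ (by fin_cases m <;> fin_cases i <;> decide)
  | r13 i => exact key _ _ (by fin_cases m <;> fin_cases i <;> decide)
  | r14 i => exact key _ _ (by fin_cases m <;> fin_cases i <;> decide)

lemma I_eq (m : Fin 5) (l : List Phi) : I m l = (l.map (cnt m)).sum := by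
  induction l with
  | nil => fin_cases m <;> simp [I]
  | cons x l ih =>
    fin_cases m <;> cases x <;>
      simp_all [I, List.count_cons, cnt] <;> omega

/-- the quantities `I0,…,I4` are invariant under the congruence generated
by the non-zero defining relations of `H`. -/
theorem stmt9 (W W' : List Phi) (h : conGen relNZ (w W) (w W')) (m : Fin 5) :
    I m W = I m W' := by
  have hle : conGen relNZ ≤ Con.ker (F m) := Con.conGen_le.2 (hrel m)
  have h2 : F m (w W) = F m (w W') := (Con.ker_rel _).1 (hle h)
  rw [F_w, F_w] at h2
  rw [I_eq, I_eq]
  exact Multiplicative.ofAdd.injective (WithZero.coe_inj.mp h2)
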